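/- The expected first-edge occupation time diverges as the perturbation vanishes: E(δ) := ∑_{n=1}^∞ P_δ(n) tends to +∞ as δ → 0⁺. -/

import Mathlib

open scoped BigOperators
open Filter Set

/-- `P δ n = ℙ(τ ≥ n)` for the perturbed 1-d senile reinforced random walk
(`P δ 1 = 1` since the product is empty). -/
noncomputable def P (δ : ℝ) (n : ℕ) : ℝ :=
  ∏ k ∈ Finset.Icc 2 n, ((k : ℝ) / ((k : ℝ) + 1) - δ)

lemma P_factor_nonneg {δ : ℝ} (hδ : δ ≤ 2/3) {k : ℕ} (hk : 2 ≤ k) :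
    0 ≤ (k : ℝ) / ((k : ℝ) + 1) - δ := by
  have hk' : (2 : ℝ) ≤ k := by exact_mod_cast hk
  have h1 : (2:ℝ)/3 ≤ (k : ℝ) / ((k : ℝ) + 1) := by
    rw [div_le_div_iff₀ (by norm_num) (by linarith)]
    linarith
  linarith

lemma P_nonneg {δ : ℝ} (hδ : δ ≤ 2/3) (n : ℕ) : 0 ≤ P δ n := by
  apply Finset.prod_nonneg
  intro k hk
  exact P_factor_nonneg hδ (Finset.mem_Icc.mp hk).1

lemma P_le {δ : ℝ} (hδ0 : 0 ≤ δ) (hδ : δ ≤ 2/3) (n : ℕ) :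
    P δ (n + 1) ≤ (1 - δ) ^ n := by
  have h := Finset.prod_le_prod (s := Finset.Icc 2 (n+1))
      (f := fun k : ℕ => (k : ℝ) / ((k : ℝ) + 1) - δ) (g := fun _ => (1 : ℝ) - δ)
      (fun k hk => P_factor_nonneg hδ (Finset.mem_Icc.mp hk).1)
      (fun k hk => by
        have hk' : (0:ℝ) < (k:ℝ) + 1 := by positivity
        have : (k : ℝ) / ((k : ℝ) + 1) ≤ 1 := by
          rw [div_le_one hk']; linarith
        linarith)
  simpa [P, Finset.prod_const, Nat.card_Icc] using h

lemma P_summable {δ : ℝ} (hδ0 : 0 < δ) (hδ : δ ≤ 2/3) :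
    Summable (fun n : ℕ => P δ (n + 1)) := by
  apply Summable.of_nonneg_of_le (fun n => P_nonneg hδ _) (fun n => P_le hδ0.le hδ n)
  exact summable_geometric_of_lt_one (by linarith) (by linarith)

lemma P_zero (n : ℕ) : P 0 (n + 1) = 2 / ((n : ℝ) + 2) := by
  induction n with
  | zero => simp [P, Finset.Icc_eq_empty_of_lt]
  | succ n ih =>
    have h : P 0 (n + 1 + 1) = P 0 (n + 1) * (((n:ℝ) + 2) / ((n:ℝ) + 3) - 0) := by
      rw [P, P, Finset.prod_Icc_succ_top (by omega)]
      congr 1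
      push_cast
      ring
    rw [h, ih]
    have h2 : (0:ℝ) < (n:ℝ) + 2 := by positivity
    have h3 : (0:ℝ) < (n:ℝ) + 3 := by positivity
    field_simp
    push_cast
    ring

lemma P_zero_sum_tendsto :
    Tendsto (fun N : ℕ => ∑ n ∈ Finset.range N, P 0 (n + 1)) atTop atTop := by
  apply tendsto_atTop_mono _ Real.tendsto_sum_range_one_div_nat_succ_atTop
  intro N
  apply Finset.sum_le_sum
  intro n _
  rw [P_zero]
  rw [div_le_div_iff₀ (by positivity) (by positivity)]
  push_cast
  linarith

/-- `E(δ) = ∑_{n=1}^∞ P_δ(n) = 𝔼[τ]` tends to `+∞` as `δ → 0⁺`. -/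
theorem expectation_tau_tendsto_atTop :
    Tendsto (fun δ : ℝ => ∑' n : ℕ, P δ (n + 1)) (nhdsWithin 0 (Set.Ioi 0)) atTop := by
  rw [tendsto_atTop]
  intro C
  obtain ⟨N, hN⟩ := (tendsto_atTop.mp P_zero_sum_tendsto (C + 1)).exists
  have hcont : Continuous fun δ : ℝ => ∑ n ∈ Finset.range N, P δ (n + 1) := by
    unfold P
    exact continuous_finset_sum _ fun n _ =>
      continuous_finset_prod _ fun k _ => continuous_const.sub continuous_id
  have hev : ∀ᶠ δ in nhds (0 : ℝ), C < ∑ n ∈ Finset.range N, P δ (n + 1) := by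
    have := hcont.continuousAt (x := (0 : ℝ))
    exact this.eventually_const_lt (by linarith)
  have hsmall : ∀ᶠ δ in nhds (0 : ℝ), δ < 2/3 :=
    Filter.Tendsto.eventually_lt_const (by norm_num) tendsto_id
  filter_upwards [self_mem_nhdsWithin, nhdsWithin_le_nhds hev,
    nhdsWithin_le_nhds hsmall] with δ hδ0 hδC hδs
  have hδ0' : (0:ℝ) < δ := hδ0
  have hsum : Summable (fun n : ℕ => P δ (n + 1)) := P_summable hδ0' hδs.le
  have := Summable.sum_le_tsum (Finset.range N) (fun n _ => P_nonneg hδs.le (n+1)) hsum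
  linarith
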